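/- Let A be a finite set of algebraic numbers, α a rational number not in A, and c > 1 a real number. Then there exists a fractional linear transformation ψ with rational coefficients such that ψ(α) is rational with |ψ(α)| > c, and |ψ(β)| < 1 for every β in A. -/

import Mathlib

/-- Let `A` be a finite set of algebraic numbers, `α` a rational number not in `A`, and
`c > 1` a real number.  Then there exists a fractional linear transformation `ψ` with
rational coefficients such that `ψ(α)` is rational with `|ψ(α)| > c`, and `|ψ(β)| < 1`
for every `β ∈ A`. -/
theorem stmt_3 (A : Finset ℂ) (hA : ∀ β ∈ A, IsAlgebraic ℚ β)
    (α : ℚ) (hα : (α : ℂ) ∉ A) (c : ℝ) (hc : 1 < c) :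
    ∃ a b c' d : ℚ, a * d - b * c' ≠ 0 ∧
      (c' : ℂ) * α + d ≠ 0 ∧
      (∃ w : ℚ, ((a : ℂ) * α + b) / ((c' : ℂ) * α + d) = (w : ℂ) ∧ c < |w|) ∧
      ∀ β ∈ A, (c' : ℂ) * β + d ≠ 0 ∧
        ‖((a : ℂ) * β + b) / ((c' : ℂ) * β + d)‖ < 1 := by
  obtain ⟨δ, hδ0, hδ1, hδA⟩ : ∃ δ : ℝ, 0 < δ ∧ δ ≤ 1 ∧
      ∀ β ∈ A, δ ≤ ‖β - α‖ := by
    rcases A.eq_empty_or_nonempty with h | h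
    · exact ⟨1, one_pos, le_refl 1, by simp [h]⟩
    · refine ⟨min 1 (A.inf' h (fun β => ‖β - α‖)), ?_, min_le_left _ _, ?_⟩
      · refine lt_min one_pos ?_
        rw [Finset.lt_inf'_iff]
        intro β hβ
        have : β ≠ (α : ℂ) := fun hb => hα (hb ▸ hβ)
        simpa [sub_ne_zero] using this
      · intro β hβ
        exact le_trans (min_le_right _ _) (Finset.inf'_le _ hβ)
  obtain ⟨ε, hε0, hεδ⟩ := exists_rat_btwn (show (0:ℝ) < δ/2 by linarith)
  have hεpos : (0:ℚ) < ε := by exact_mod_cast hε0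
  have hc0 : (0:ℝ) < c + 1 := by linarith
  obtain ⟨ε', hε'0, hε'lt⟩ := exists_rat_btwn (div_pos hε0 hc0)
  have hε'pos : (0:ℚ) < ε' := by exact_mod_cast hε'0
  have hε'ltε : (ε':ℝ) < ε := lt_of_lt_of_le hε'lt (by
    rw [div_le_iff₀ hc0]; nlinarith)
  refine ⟨0, ε, 1, ε' - α, ?_, ?_, ⟨ε/ε', ?_, ?_⟩, ?_⟩
  · simp [hεpos.ne']
  · push_cast
    intro h
    have : (ε' : ℂ) = 0 := by linear_combination h
    exact_mod_cast hε'pos.ne' (by exact_mod_cast this)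
  · have hne : (ε' : ℂ) ≠ 0 := by exact_mod_cast hε'pos.ne'
    push_cast
    rw [show (1:ℂ) * α + (ε' - α) = ε' by ring, show (0:ℂ) * α + ε = ε by ring]
  · have key : (ε':ℝ)*(c+1) < ε := (lt_div_iff₀ hc0).mp hε'lt
    have hv : c < (ε:ℝ)/ε' := by
      rw [lt_div_iff₀ hε'0]
      nlinarith
    have habs : |ε/ε'| = ε/ε' := abs_of_pos (div_pos hεpos hε'pos)
    rw [habs]
    push_cast
    exact hv
  · intro β hβ
    have hδβ := hδA β hβ
    have hlow : δ/2 ≤ ‖β - α + ε'‖ := by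
      have h1 : ‖β - ↑α‖ ≤ ‖β - ↑α + ↑ε'‖ + ‖((ε':ℚ):ℂ)‖ := by
        simpa using norm_add_le (β - ↑α + ↑ε') (-((ε':ℚ):ℂ))
      have h2 : ‖((ε' : ℚ) : ℂ)‖ = (ε' : ℝ) := by
        rw [show ((ε':ℚ):ℂ) = (((ε':ℝ)):ℂ) by push_cast; rfl, Complex.norm_real, Real.norm_eq_abs, abs_of_pos hε'0]
      have : (ε':ℝ) < δ/2 := lt_trans hε'ltε hεδ
      linarith
    have hpos : 0 < ‖β - α + ε'‖ := lt_of_lt_of_le (by linarith) hlow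
    have hne : ((1:ℚ):ℂ) * β + ((ε' - α : ℚ) : ℂ) = β - ↑α + ↑ε' := by push_cast; ring
    constructor
    · rw [hne]
      intro h
      rw [h] at hpos
      simp at hpos
    · rw [hne, show ((0:ℚ):ℂ) * β + ((ε:ℚ):ℂ) = ((ε:ℚ):ℂ) by push_cast; ring, norm_div]
      rw [div_lt_one hpos]
      have h2 : ‖((ε : ℚ) : ℂ)‖ = (ε : ℝ) := by
        rw [show ((ε:ℚ):ℂ) = (((ε:ℝ)):ℂ) by push_cast; rfl, Complex.norm_real, Real.norm_eq_abs, abs_of_pos hε0]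
      rw [h2]
      linarith
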